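/- Let C > 0 be real, let S be a set, and let u : S → ℂ. For each σ ∈ S define φ_σ = (1/√(1+|u_σ|²))(|0⟩ + u_σ|1⟩) and ψ_σ = (1/√(1+C²|u_σ|²))(|0⟩ + C·u_σ|1⟩) in ℂ², let R = (1/√(1+C²))(|0⟩⊗|1⟩ − C·|1⟩⊗|0⟩) in ℂ² ⊗ ℂ², and set K_σ = C²(1+|u_σ|²) / ((1+C²|u_σ|²)(1+C²)). Then for all α, β ∈ S: |⟨R, φ_α ⊗ ψ_β⟩|² = K_β·(1 − |⟨φ_β, φ_α⟩|²). In particular, |⟨R, φ_α ⊗ ψ_β⟩|² = C²|u_α − u_β|² / ((1+|u_α|²)(1+C²|u_β|²)(1+C²)). -/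

import Mathlib

open scoped InnerProductSpace

/-- A concrete model of the tensor product `ℂ² ⊗ ℂ²`, realized as
`EuclideanSpace ℂ (Fin 2 × Fin 2)`; it satisfies
`⟪tens a b, tens c d⟫ = ⟪a, c⟫ * ⟪b, d⟫`. -/
noncomputable def tens (f g : EuclideanSpace ℂ (Fin 2)) :
    EuclideanSpace ℂ (Fin 2 × Fin 2) :=
  (WithLp.equiv 2 (Fin 2 × Fin 2 → ℂ)).symm (fun ij => f ij.1 * g ij.2)

/-- In a canonical strict one-qubit fingerprinting scheme with
parameter `C > 0`, Alice's fingerprints `φ_σ ∝ |0⟩ + u_σ|1⟩`, Bob's fingerprints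
`ψ_σ ∝ |0⟩ + C·u_σ|1⟩`, and reject state `R ∝ |01⟩ − C|10⟩`, the rejection
probability of the hybrid state `φ_α ⊗ ψ_β` is
`|⟨R, φ_α ⊗ ψ_β⟩|² = K_β (1 − |⟨φ_β, φ_α⟩|²)`
with `K_σ = C²(1+|u_σ|²)/((1+C²|u_σ|²)(1+C²))`; explicitly it equals
`C²|u_α − u_β|²/((1+|u_α|²)(1+C²|u_β|²)(1+C²))`. -/
lemma key_identity (a b : ℂ) :
    ‖(1 : ℂ) + (starRingEnd ℂ) b * a‖ ^ 2 + ‖a - b‖ ^ 2 =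
      (1 + ‖a‖ ^ 2) * (1 + ‖b‖ ^ 2) := by
  simp only [Complex.sq_norm, Complex.normSq_apply,
    Complex.add_re, Complex.add_im, Complex.mul_re, Complex.mul_im,
    Complex.sub_re, Complex.sub_im, Complex.conj_re, Complex.conj_im,
    Complex.one_re, Complex.one_im]
  ring

theorem canonical_rejection_probability {S : Type*} (C : ℝ) (hC : 0 < C)
    (u : S → ℂ) (φ ψ : S → EuclideanSpace ℂ (Fin 2))
    (hφ : ∀ σ, φ σ = (Real.sqrt (1 + ‖u σ‖ ^ 2))⁻¹ •
      (EuclideanSpace.single 0 1 + u σ • EuclideanSpace.single 1 1))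
    (hψ : ∀ σ, ψ σ = (Real.sqrt (1 + C ^ 2 * ‖u σ‖ ^ 2))⁻¹ •
      (EuclideanSpace.single 0 1 + ((C : ℂ) * u σ) • EuclideanSpace.single 1 1))
    (R : EuclideanSpace ℂ (Fin 2 × Fin 2))
    (hR : R = (Real.sqrt (1 + C ^ 2))⁻¹ •
      (tens (EuclideanSpace.single 0 1) (EuclideanSpace.single 1 1) -
        (C : ℂ) • tens (EuclideanSpace.single 1 1) (EuclideanSpace.single 0 1)))
    (K : S → ℝ)
    (hK : ∀ σ, K σ = C ^ 2 * (1 + ‖u σ‖ ^ 2) /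
      ((1 + C ^ 2 * ‖u σ‖ ^ 2) * (1 + C ^ 2))) :
    ∀ α β : S,
      ‖⟪R, tens (φ α) (ψ β)⟫_ℂ‖ ^ 2 = K β * (1 - ‖⟪φ β, φ α⟫_ℂ‖ ^ 2) ∧
      ‖⟪R, tens (φ α) (ψ β)⟫_ℂ‖ ^ 2 =
        C ^ 2 * ‖u α - u β‖ ^ 2 /
          ((1 + ‖u α‖ ^ 2) * (1 + C ^ 2 * ‖u β‖ ^ 2) * (1 + C ^ 2)) := by
  intro α β
  have hA : (0:ℝ) < 1 + ‖u α‖ ^ 2 := by positivity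
  have hB : (0:ℝ) < 1 + C ^ 2 * ‖u β‖ ^ 2 := by positivity
  have hB' : (0:ℝ) < 1 + ‖u β‖ ^ 2 := by positivity
  have hCC : (0:ℝ) < 1 + C ^ 2 := by positivity
  have key1 : ⟪R, tens (φ α) (ψ β)⟫_ℂ =
      ((Real.sqrt (1 + C ^ 2))⁻¹ : ℂ) * ((Real.sqrt (1 + ‖u α‖ ^ 2))⁻¹ : ℂ) *
        ((Real.sqrt (1 + C ^ 2 * ‖u β‖ ^ 2))⁻¹ : ℂ) * ((C : ℂ) * (u β - u α)) := by
    simp [hφ, hψ, hR, tens, PiLp.inner_apply, Fintype.sum_prod_type,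
      Fin.sum_univ_two, EuclideanSpace.single_apply, Complex.conj_ofReal]
    ring
  have key2 : ⟪φ β, φ α⟫_ℂ =
      ((Real.sqrt (1 + ‖u β‖ ^ 2))⁻¹ : ℂ) * ((Real.sqrt (1 + ‖u α‖ ^ 2))⁻¹ : ℂ) *
        (1 + (starRingEnd ℂ) (u β) * u α) := by
    simp [hφ, PiLp.inner_apply, Fin.sum_univ_two,
      EuclideanSpace.single_apply, Complex.conj_ofReal]
    ring
  have hnorm1 : ‖⟪R, tens (φ α) (ψ β)⟫_ℂ‖ ^ 2 =
      (1 + C ^ 2)⁻¹ * (1 + ‖u α‖ ^ 2)⁻¹ * (1 + C ^ 2 * ‖u β‖ ^ 2)⁻¹ *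
        (C ^ 2 * ‖u α - u β‖ ^ 2) := by
    rw [key1]
    simp only [norm_mul, norm_inv, Complex.norm_real, Real.norm_eq_abs]
    rw [abs_of_nonneg (Real.sqrt_nonneg _), abs_of_nonneg (Real.sqrt_nonneg _),
      abs_of_nonneg (Real.sqrt_nonneg _), abs_of_pos hC, norm_sub_rev]
    rw [mul_pow, mul_pow, mul_pow, mul_pow, inv_pow, inv_pow, inv_pow,
      Real.sq_sqrt hCC.le, Real.sq_sqrt hA.le, Real.sq_sqrt hB.le]
  have hnorm2 : ‖⟪φ β, φ α⟫_ℂ‖ ^ 2 =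
      (1 + ‖u β‖ ^ 2)⁻¹ * (1 + ‖u α‖ ^ 2)⁻¹ *
        ‖(1 : ℂ) + (starRingEnd ℂ) (u β) * u α‖ ^ 2 := by
    rw [key2]
    simp only [norm_mul, norm_inv, Complex.norm_real, Real.norm_eq_abs]
    rw [abs_of_nonneg (Real.sqrt_nonneg _), abs_of_nonneg (Real.sqrt_nonneg _)]
    rw [mul_pow, mul_pow, inv_pow, inv_pow, Real.sq_sqrt hB'.le, Real.sq_sqrt hA.le]
  have hid := key_identity (u α) (u β)
  have hA0 := hA.ne'
  have hB0 := hB.ne'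
  have hB0' := hB'.ne'
  have hCC0 := hCC.ne'
  constructor
  · rw [hnorm1, hnorm2, hK β]
    have h1 : ‖(1 : ℂ) + (starRingEnd ℂ) (u β) * u α‖ ^ 2 =
        (1 + ‖u α‖ ^ 2) * (1 + ‖u β‖ ^ 2) - ‖u α - u β‖ ^ 2 := by linarith
    rw [h1]
    field_simp
    ring
  · rw [hnorm1, div_eq_mul_inv, mul_inv, mul_inv]
    ring
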